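/- In the variety of all Lie algebra representations over a field k of characteristic 0, the words for the Lie bracket and action operations satisfying the strongly-stable automorphism conditions must be of the form w_{[,]} = a[x_1^(1), x_2^(1)] and w_∘ = a(x^(1) ∘ x^(2)) with the same nonzero scalar a ∈ k^*: the equality of scalars follows from the identity [x_1, x_2] ∘ v = x_1 ∘ (x_2 ∘ v) − x_2 ∘ (x_1 ∘ v). Concretely: if a, b ∈ k^* and the map induced by x_1 ↦ x_1, x_2 ↦ x_2, v ↦ v intertwines the operations [x_1,x_2]' := a[x_1,x_2] and x∘'v := b(x∘v) so that the representation axiom [x_1,x_2]' ∘' v = x_1 ∘' (x_2 ∘' v) − x_2 ∘' (x_1 ∘' v) holds in the free representation, then a = b. -/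

import Mathlib

attribute [local instance 100] LieRing.ofAssociativeRing

/-- In the free representation `F(x₁⁽¹⁾, x₂⁽¹⁾, x⁽²⁾) = (L, A·v)` of Lie algebra
representations over a field `k` of characteristic `0` (with `L` the free Lie algebra on two
generators and `A` its universal enveloping algebra, acting on `v = 1 ∈ A` by left
multiplication via the canonical embedding `j : L → A`), if the twisted operations
`[x₁,x₂]' = a•[x₁,x₂]` and `x ∘' w = b•(j x * w)` satisfy the representation axiom
`[x₁,x₂]' ∘' v = x₁ ∘' (x₂ ∘' v) − x₂ ∘' (x₁ ∘' v)`, then `a = b`. -/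
theorem stmt_16 (k : Type*) [Field k] [CharZero k] (a b : k) (ha : a ≠ 0) (hb : b ≠ 0)
    (j : FreeLieAlgebra k (Fin 2) →ₗ⁅k⁆ FreeAlgebra k (Fin 2))
    (hj : j = FreeLieAlgebra.lift k (FreeAlgebra.ι k))
    (haxiom :
      b • (j (a • ⁅FreeLieAlgebra.of k (0 : Fin 2), FreeLieAlgebra.of k (1 : Fin 2)⁆) * 1) =
        b • (j (FreeLieAlgebra.of k (0 : Fin 2)) * (b • (j (FreeLieAlgebra.of k (1 : Fin 2)) * 1))) -
          b • (j (FreeLieAlgebra.of k (1 : Fin 2)) * (b • (j (FreeLieAlgebra.of k (0 : Fin 2)) * 1)))) :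
    a = b := by
  subst hj
  -- simplify j applications
  have h0 : ∀ i : Fin 2, (FreeLieAlgebra.lift k (FreeAlgebra.ι k)) (FreeLieAlgebra.of k i)
      = FreeAlgebra.ι k i := fun i => FreeLieAlgebra.lift_of_apply _ i
  set X0 := FreeAlgebra.ι k (0 : Fin 2)
  set X1 := FreeAlgebra.ι k (1 : Fin 2)
  have hax : (b * a) • (X0 * X1 - X1 * X0) = (b * b) • (X0 * X1 - X1 * X0) := by
    have := haxiom
    rw [map_smul, LieHom.map_lie, h0, h0, LieRing.of_associative_ring_bracket] at this
    simp only [mul_one, smul_sub, mul_smul_comm, smul_smul] at this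
    linear_combination (norm := module) this
  have hne : X0 * X1 - X1 * X0 ≠ 0 := by
    intro h
    have := congrArg (FreeAlgebra.lift k (fun i : Fin 2 =>
      if i = 0 then (Matrix.single 0 1 (1:k) : Matrix (Fin 2) (Fin 2) k)
      else Matrix.single 1 0 (1:k))) h
    simp only [map_sub, map_mul, map_zero, X0, X1, FreeAlgebra.lift_ι_apply] at this
    norm_num [Matrix.single_mul_single_same, Matrix.single_mul_single_of_ne] at this
    have := congrFun (congrFun this 0) 0
    simp [Matrix.single, Matrix.sub_apply] at this
  have : b * a = b * b := by
    by_contra hne'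
    exact hne (by
      have := sub_eq_zero.2 hax
      rw [← sub_smul] at this
      exact (smul_eq_zero.1 this).resolve_left (sub_ne_zero.2 hne'))
  exact mul_left_cancel₀ hb this
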